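/- In the distributive lattice of antichains of intervals over a finite totally ordered set (equivalently, the ideal completion of intervals ordered by reverse inclusion), the Brouwerian difference A − B = {I ∈ A : no J ∈ B satisfies J ⊆ I} is the least element X of the lattice such that A ≤ B ∨ X; in particular A − B ≤ A and A ≤ B ∨ (A − B). -/

import Mathlib

/-- `cont p q`: interval `p` is contained in interval `q`. -/
def cont {O : Type*} [LinearOrder O] (p q : O × O) : Prop :=
  q.1 ≤ p.1 ∧ p.2 ≤ q.2

/-- `ale A B`: every interval of `A` contains some interval of `B`. -/
def ale {O : Type*} [LinearOrder O] (A B : Set (O × O)) : Prop :=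
  ∀ p ∈ A, ∃ q ∈ B, cont q p

/-- The join `A ∨ B`: inclusion-minimal intervals of `A ∪ B`. -/
def ajoin {O : Type*} [LinearOrder O] (A B : Set (O × O)) : Set (O × O) :=
  {p ∈ A ∪ B | ∀ q ∈ A ∪ B, cont q p → q = p}

/-- The Brouwerian difference `A − B`: intervals of `A` containing no interval of `B`. -/
def adiff {O : Type*} [LinearOrder O] (A B : Set (O × O)) : Set (O × O) :=
  {p ∈ A | ∀ q ∈ B, ¬ cont q p}

lemma cont_refl {O : Type*} [LinearOrder O] (p : O × O) : cont p p := ⟨le_refl _, le_refl _⟩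

lemma cont_trans {O : Type*} [LinearOrder O] {p q r : O × O} (h1 : cont p q) (h2 : cont q r) :
    cont p r := ⟨h2.1.trans h1.1, h1.2.trans h2.2⟩

lemma cont_antisymm {O : Type*} [LinearOrder O] {p q : O × O} (h1 : cont p q) (h2 : cont q p) :
    p = q := Prod.ext (le_antisymm h2.1 h1.1) (le_antisymm h1.2 h2.2)

lemma exists_min {O : Type*} [LinearOrder O] [Fintype O] (S : Set (O × O)) (p : O × O)
    (hp : p ∈ S) : ∃ q ∈ S, cont q p ∧ ∀ r ∈ S, cont r q → r = q := by
  have hfin : ({q ∈ S | cont q p}).Finite := Set.toFinite _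
  obtain ⟨a, ha, hmin⟩ := Set.Finite.exists_minimalFor
    (fun q => ((q.1, q.2) : Oᵒᵈ × O)) _ hfin ⟨p, hp, cont_refl p⟩
  refine ⟨a, ha.1, ha.2, fun r hr hra => ?_⟩
  have hrp : cont r p := cont_trans hra ha.2
  have : ((a.1, a.2) : Oᵒᵈ × O) = (r.1, r.2) := by
    apply le_antisymm (hmin ⟨hr, hrp⟩ ⟨hra.1, hra.2⟩)
    exact ⟨hra.1, hra.2⟩
  have h1 := congrArg Prod.fst this
  have h2 := congrArg Prod.snd this
  exact Prod.ext h1.symm h2.symm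

/-- `A − B` is the least antichain `X` such that `A ≤ B ∨ X`;
in particular `A − B ≤ A` and `A ≤ B ∨ (A − B)`. -/
theorem stmt19 {O : Type*} [LinearOrder O] [Fintype O] (A B : Set (O × O))
    (hA : ∀ p ∈ A, p.1 ≤ p.2) (hB : ∀ p ∈ B, p.1 ≤ p.2)
    (hAa : IsAntichain (cont (O := O)) A)
    (hBa : IsAntichain (cont (O := O)) B) :
    ale (adiff A B) A ∧ ale A (ajoin B (adiff A B)) ∧
      ∀ X : Set (O × O), (∀ p ∈ X, p.1 ≤ p.2) → IsAntichain (cont (O := O)) X →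
        ale A (ajoin B X) → ale (adiff A B) X := by
  refine ⟨fun p hp => ⟨p, hp.1, cont_refl p⟩, ?_, ?_⟩
  · intro p hp
    have : ∃ q₀ ∈ B ∪ adiff A B, cont q₀ p := by
      by_cases h : ∃ q ∈ B, cont q p
      · obtain ⟨q, hq, hqp⟩ := h
        exact ⟨q, Or.inl hq, hqp⟩
      · push_neg at h
        exact ⟨p, Or.inr ⟨hp, h⟩, cont_refl p⟩
    obtain ⟨q₀, hq₀, hq₀p⟩ := this
    obtain ⟨q, hq, hqq₀, hmin⟩ := exists_min _ q₀ hq₀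
    exact ⟨q, ⟨hq, hmin⟩, cont_trans hqq₀ hq₀p⟩
  · intro X _ _ hle p hp
    obtain ⟨q, ⟨hq, _⟩, hqp⟩ := hle p hp.1
    cases hq with
    | inl h => exact absurd hqp (hp.2 q h)
    | inr h => exact ⟨q, h, hqp⟩
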